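/- Let H be a Hilbert space, K : H → H compact with N(I - K) = {0}, and let {L_n} be an increasing sequence of finite-dimensional subspaces that is limit dense in H (ρ(f, L_n) → 0 for every f ∈ H), with P_n the orthogonal projection onto L_n. Then for all sufficiently large n the projected equation P_n(I - K)P_n u_n = P_n f has a unique solution u_n ∈ L_n, and ‖u_n - u‖ → 0 where u is the unique solution of u = Ku + f. -/

import Mathlib

open Filter
open scoped InnerProductSpace

open Metric
open scoped NNReal

section Aux
set_option linter.unusedSectionVars false
variable {H : Type*} [NormedAddCommGroup H] [InnerProductSpace ℂ H] [CompleteSpace H]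

/-- Compact operators map bounded sequences to sequences with convergent subsequences. -/

lemma compact_subseq (C : H →L[ℂ] H) (hC : IsCompactOperator C) {R : ℝ}
    (z : ℕ → H) (hz : ∀ k, ‖z k‖ ≤ R) :
    ∃ (y : H) (φ : ℕ → ℕ), StrictMono φ ∧ Tendsto (fun k => C (z (φ k))) atTop (nhds y) := by
  have hcomp : IsCompact (closure (C.toLinearMap '' closedBall (0:H) R)) :=
    IsCompactOperator.isCompact_closure_image_closedBall (𝕜₁ := ℂ) (f := C.toLinearMap) hC R
  have hmem : ∀ k, C (z k) ∈ closure (C.toLinearMap '' closedBall (0:H) R) := fun k =>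
    subset_closure ⟨z k, by simpa [mem_closedBall, dist_zero_right] using hz k, rfl⟩
  obtain ⟨y, _, φ, hφ, hconv⟩ := hcomp.tendsto_subseq hmem
  exact ⟨y, φ, hφ, hconv⟩

/-- An injective operator of the form `1 - compact` is bounded below. -/
lemma bdd_below_of_inj (C : H →L[ℂ] H) (hC : IsCompactOperator C)
    (hi : ∀ x : H, x - C x = 0 → x = 0) :
    ∃ c > (0:ℝ), ∀ x : H, c * ‖x‖ ≤ ‖x - C x‖ := by
  by_contra h
  push_neg at h
  have hex : ∀ k : ℕ, ∃ x : H, ‖x - C x‖ < (1 / (k + 1)) * ‖x‖ := fun k =>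
    h (1 / (k + 1)) (by positivity)
  choose x hx using hex
  have hxne : ∀ k, x k ≠ 0 := by
    intro k hk
    have := hx k
    rw [hk] at this
    simp at this
  set z : ℕ → H := fun k => (‖x k‖⁻¹ : ℂ) • x k with hzdef
  have hznorm : ∀ k, ‖z k‖ = 1 := by
    intro k
    have : ‖x k‖ ≠ 0 := norm_ne_zero_iff.2 (hxne k)
    simp [hzdef, norm_smul, inv_mul_cancel₀ this]
  have hzT : ∀ k, ‖z k - C (z k)‖ < 1 / (k + 1) := by
    intro k
    have hnx : (0:ℝ) < ‖x k‖ := norm_pos_iff.2 (hxne k)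
    have : z k - C (z k) = (‖x k‖⁻¹ : ℂ) • (x k - C (x k)) := by
      simp [hzdef, smul_sub]
    rw [this, norm_smul]
    have h1 : ‖(‖x k‖⁻¹ : ℂ)‖ = ‖x k‖⁻¹ := by
      simp [Complex.norm_real]
    rw [h1]
    calc ‖x k‖⁻¹ * ‖x k - C (x k)‖ < ‖x k‖⁻¹ * ((1 / (k + 1)) * ‖x k‖) := by
          apply mul_lt_mul_of_pos_left (hx k) (by positivity)
      _ = 1 / (k + 1) := by field_simp
  obtain ⟨y, φ, hφ, hconv⟩ := compact_subseq C hC z (fun k => le_of_eq (hznorm k))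
  have hT0 : Tendsto (fun k => z (φ k) - C (z (φ k))) atTop (nhds 0) := by
    rw [tendsto_iff_norm_sub_tendsto_zero]
    have hb : ∀ k : ℕ, ‖z (φ k) - C (z (φ k)) - 0‖ ≤ 1 / ((k:ℝ) + 1) := by
      intro k
      simp only [sub_zero]
      refine le_trans (hzT (φ k)).le ?_
      have : (k : ℝ) + 1 ≤ (φ k : ℝ) + 1 := by exact_mod_cast Nat.succ_le_succ (hφ.id_le k)
      exact one_div_le_one_div_of_le (by positivity) this
    exact squeeze_zero (fun k => norm_nonneg _) hb tendsto_one_div_add_atTop_nhds_zero_nat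
  have hzconv : Tendsto (fun k => z (φ k)) atTop (nhds y) := by
    have : (fun k => z (φ k)) = fun k => (z (φ k) - C (z (φ k))) + C (z (φ k)) := by
      funext k; abel
    rw [this]
    simpa using hT0.add hconv
  have hyn : ‖y‖ = 1 := by
    have h0 := (continuous_norm.tendsto y).comp hzconv
    have h1 : Tendsto (fun _ : ℕ => (1:ℝ)) atTop (nhds ‖y‖) := by
      have : ((fun a => ‖a‖) ∘ fun k => z (φ k)) = fun _ : ℕ => (1:ℝ) := by
        funext k; simp [hznorm]
      rwa [this] at h0
    exact tendsto_nhds_unique h1 tendsto_const_nhds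
  have hTy : y - C y = 0 := by
    have hc : Tendsto (fun k => z (φ k) - C (z (φ k))) atTop (nhds (y - C y)) :=
      hzconv.sub ((C.continuous.tendsto y).comp hzconv)
    exact tendsto_nhds_unique hc hT0
  have := hi y hTy
  rw [this] at hyn
  simp at hyn

/-- Riesz theory / Fredholm alternative: an injective operator `1 - compact` is surjective. -/
lemma fredholm_surjective (C : H →L[ℂ] H) (hC : IsCompactOperator C)
    (hi : ∀ x : H, x - C x = 0 → x = 0) :
    ∀ f : H, ∃ x : H, x - C x = f := by
  set T : H →L[ℂ] H := 1 - C with hT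
  have hTx : ∀ x, T x = x - C x := fun x => by simp [hT]
  have hCx : ∀ x, C x = x - T x := fun x => by rw [hTx]; abel
  have hTinj : Function.Injective T := by
    intro a b hab
    have h0 : (a - b) - C (a - b) = 0 := by
      rw [← hTx, map_sub, hab, sub_self]
    have := hi _ h0
    exact sub_eq_zero.1 this
  -- injectivity of powers
  have hTninj : ∀ n : ℕ, Function.Injective ⇑(T ^ n) := by
    intro n
    induction n with
    | zero => simpa using Function.injective_id
    | succ n ih =>
      intro a b hab
      rw [pow_succ] at hab
      exact hTinj (ih hab)
  -- compactness of 1 - T^n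
  have hCn : ∀ n : ℕ, IsCompactOperator ⇑((1 : H →L[ℂ] H) - T ^ n) := by
    intro n
    induction n with
    | zero =>
      have h0 : ((1 : H →L[ℂ] H) - T ^ 0) = 0 := by simp
      rw [h0]
      exact isCompactOperator_zero
    | succ n ih =>
      have hCeq : C = 1 - T := by rw [hT, sub_sub_cancel]
      have hid : (1 : H →L[ℂ] H) - T ^ (n + 1) = ((1 : H →L[ℂ] H) - T ^ n) + T ^ n * C := by
        rw [hCeq, mul_sub, mul_one, pow_succ]
        abel
      rw [hid]
      have h1 : IsCompactOperator (⇑(T ^ n) ∘ ⇑C) := hC.clm_comp (T ^ n)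
      have h2 : IsCompactOperator ⇑(T ^ n * C) := h1
      have := ih.add h2
      exact this
  -- powers are bounded below, hence closed range
  have hbdd : ∀ n : ℕ, ∃ c > (0:ℝ), ∀ x : H, c * ‖x‖ ≤ ‖(T ^ n) x‖ := by
    intro n
    have hin : ∀ x : H, x - ((1 : H →L[ℂ] H) - T ^ n) x = 0 → x = 0 := by
      intro x hx
      have hx' : (T ^ n) x = 0 := by
        simpa [ContinuousLinearMap.sub_apply, sub_sub_cancel] using hx
      exact hTninj n (by simpa using hx')
    obtain ⟨c, hc, hle⟩ := bdd_below_of_inj _ (hCn n) hin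
    refine ⟨c, hc, fun x => ?_⟩
    have := hle x
    simpa [ContinuousLinearMap.sub_apply, sub_sub_cancel] using this
  have hclosed : ∀ n : ℕ, IsClosed ((LinearMap.range ((T ^ n : H →L[ℂ] H) : H →ₗ[ℂ] H) : Submodule ℂ H) : Set H) := by
    intro n
    obtain ⟨c, hc, hle⟩ := hbdd n
    have hb : ∀ x : H, ‖x‖ ≤ (c.toNNReal⁻¹ : ℝ≥0) * ‖(T ^ n) x‖ := by
      intro x
      have h1 : ((c.toNNReal⁻¹ : ℝ≥0) : ℝ) = c⁻¹ := by
        simp [Real.coe_toNNReal _ hc.le]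
      rw [h1, ← div_eq_inv_mul, le_div_iff₀ hc, mul_comm]
      exact hle x
    have ha := (T ^ n).antilipschitz_of_bound hb
    have := ha.isClosed_range (T ^ n).uniformContinuous
    simpa only [LinearMap.coe_range, ContinuousLinearMap.coe_coe] using this
  -- the ranges are decreasing
  have hmono : ∀ m n : ℕ, n ≤ m →
      LinearMap.range ((T ^ m : H →L[ℂ] H) : H →ₗ[ℂ] H) ≤ LinearMap.range ((T ^ n : H →L[ℂ] H) : H →ₗ[ℂ] H) := by
    intro m n hnm
    obtain ⟨k, rfl⟩ := Nat.exists_eq_add_of_le hnm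
    rintro y ⟨x, rfl⟩
    exact ⟨(T ^ k) x, by rw [pow_add]; rfl⟩
  -- suppose not surjective
  by_contra h
  push_neg at h
  obtain ⟨g, hg⟩ := h
  have hgr : g ∉ LinearMap.range ((T ^ 1 : H →L[ℂ] H) : H →ₗ[ℂ] H) := by
    rintro ⟨z, hz⟩
    exact hg z (by rw [← hTx]; simpa using hz)
  have hstrict : ∀ n : ℕ, (T ^ n) g ∉ LinearMap.range ((T ^ (n + 1) : H →L[ℂ] H) : H →ₗ[ℂ] H) := by
    rintro n ⟨z, hz⟩
    rw [pow_succ] at hz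
    have : T z = g := hTninj n hz
    exact hgr ⟨z, by simpa using this⟩
  -- choose unit vectors in R n ∩ (R (n+1))ᗮ
  have hex : ∀ n : ℕ, ∃ e : H, ‖e‖ = 1 ∧ e ∈ LinearMap.range ((T ^ n : H →L[ℂ] H) : H →ₗ[ℂ] H) ∧
      e ∈ (LinearMap.range ((T ^ (n + 1) : H →L[ℂ] H) : H →ₗ[ℂ] H))ᗮ := by
    intro n
    set S : Submodule ℂ H := LinearMap.range ((T ^ (n + 1) : H →L[ℂ] H) : H →ₗ[ℂ] H) with hS
    haveI : CompleteSpace S := (hclosed (n + 1)).completeSpace_coe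
    set gn : H := (T ^ n) g with hgn
    set e : H := gn - (S.orthogonalProjectionOnto gn : H) with he
    have he_orth : e ∈ Sᗮ := S.sub_starProjection_mem_orthogonal gn
    have he_mem : e ∈ LinearMap.range ((T ^ n : H →L[ℂ] H) : H →ₗ[ℂ] H) := by
      apply Submodule.sub_mem
      · exact ⟨g, rfl⟩
      · exact hmono (n + 1) n (Nat.le_succ n) (S.orthogonalProjectionOnto gn).2
    have he_ne : e ≠ 0 := by
      intro h0
      apply hstrict n
      rw [he] at h0
      show gn ∈ S
      rw [sub_eq_zero.1 h0]
      exact (S.orthogonalProjectionOnto gn).2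
    have hne : ‖e‖ ≠ 0 := norm_ne_zero_iff.2 he_ne
    refine ⟨(‖e‖⁻¹ : ℂ) • e, ?_, Submodule.smul_mem _ _ he_mem, Submodule.smul_mem _ _ he_orth⟩
    simp [norm_smul, inv_mul_cancel₀ hne]
  choose xseq hx1 hx2 hx3 using hex
  -- key separation estimate
  have hsep : ∀ m n : ℕ, n < m → 1 ≤ ‖C (xseq n) - C (xseq m)‖ := by
    intro m n hnm
    set w : H := T (xseq n) + xseq m - T (xseq m) with hw
    have hdiff : C (xseq n) - C (xseq m) = xseq n - w := by
      rw [hCx, hCx, hw]; abel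
    have hwmem : w ∈ LinearMap.range ((T ^ (n + 1) : H →L[ℂ] H) : H →ₗ[ℂ] H) := by
      have h1 : T (xseq n) ∈ LinearMap.range ((T ^ (n + 1) : H →L[ℂ] H) : H →ₗ[ℂ] H) := by
        obtain ⟨z, hz⟩ := hx2 n
        exact ⟨z, by rw [← hz, pow_succ']; rfl⟩
      have h2 : xseq m ∈ LinearMap.range ((T ^ (n + 1) : H →L[ℂ] H) : H →ₗ[ℂ] H) :=
        hmono m (n + 1) hnm (hx2 m)
      have h3 : T (xseq m) ∈ LinearMap.range ((T ^ (n + 1) : H →L[ℂ] H) : H →ₗ[ℂ] H) := by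
        apply hmono (m + 1) (n + 1) (Nat.succ_le_succ hnm.le)
        obtain ⟨z, hz⟩ := hx2 m
        exact ⟨z, by rw [← hz, pow_succ']; rfl⟩
      exact Submodule.sub_mem _ (Submodule.add_mem _ h1 h2) h3
    have hinner : ⟪xseq n, -w⟫_ℂ = 0 := by
      rw [inner_neg_right]
      have := (Submodule.mem_orthogonal _ _).1 (hx3 n) w hwmem
      rw [← inner_conj_symm, this]
      simp
    have hpy := norm_add_sq_eq_norm_sq_add_norm_sq_of_inner_eq_zero (xseq n) (-w) hinner
    rw [← sub_eq_add_neg] at hpy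
    rw [hdiff]
    nlinarith [norm_nonneg (xseq n - w), norm_nonneg w, hx1 n, hpy]
  -- contradiction with compactness
  obtain ⟨y, φ, hφ, hconv⟩ := compact_subseq C hC xseq (fun k => (hx1 k).le)
  have hcauchy : CauchySeq (fun k => C (xseq (φ k))) := hconv.cauchySeq
  obtain ⟨N, hN⟩ := Metric.cauchySeq_iff.1 hcauchy 1 one_pos
  have h1 := hN (N + 1) (Nat.le_succ N) N (le_refl N)
  rw [dist_eq_norm] at h1
  have h2 : 1 ≤ ‖C (xseq (φ (N + 1))) - C (xseq (φ N))‖ := by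
    have : φ N < φ (N + 1) := hφ (Nat.lt_succ_self N)
    have := hsep (φ (N + 1)) (φ N) this
    rwa [norm_sub_rev]
  linarith


end Aux

/-- Convergence of the projection (Galerkin) method: if `K` is compact with
`N(I - K) = {0}`, `{Lₙ}` is an increasing limit-dense sequence of finite-dimensional
subspaces, and `Pₙ` is the orthogonal projection onto `Lₙ`, then for all sufficiently
large `n` the projected equation `Pₙ(I - K)uₙ = Pₙ f`, `uₙ ∈ Lₙ`, is uniquely solvable
and `uₙ → u`, the unique solution of `u = Ku + f`. -/
theorem projection_method_converges
    {H : Type*} [NormedAddCommGroup H] [InnerProductSpace ℂ H] [CompleteSpace H]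
    (K : H →L[ℂ] H) (hK : IsCompactOperator K)
    (hinj : ∀ u : H, u = K u → u = 0)
    (L : ℕ → Submodule ℂ H) (hfin : ∀ n, FiniteDimensional ℂ (L n))
    (hmono : Monotone L)
    (hdense : ∀ f : H, Tendsto (fun n => Metric.infDist f (L n : Set H)) atTop (nhds 0))
    (P : ℕ → H →L[ℂ] H)
    (hproj : ∀ (n : ℕ) (x : H), P n x ∈ L n ∧ ∀ y ∈ L n, ⟪x - P n x, y⟫_ℂ = 0)
    (f : H) :
    ∃ u : H, (u = K u + f) ∧
      ∃ Nbig : ℕ,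
        (∀ n ≥ Nbig, ∃! w : H, w ∈ L n ∧ P n (w - K w) = P n f) ∧
        ∀ useq : ℕ → H,
          (∀ n ≥ Nbig, useq n ∈ L n ∧ P n (useq n - K (useq n)) = P n f) →
          Tendsto useq atTop (nhds u) := by
  classical
  have hPmem : ∀ n x, P n x ∈ L n := fun n x => (hproj n x).1
  have hpyth : ∀ (n : ℕ) (x : H), ∀ y ∈ L n, ‖x - P n x‖ ≤ ‖x - y‖ := by
    intro n x y hy
    have hz : ⟪x - P n x, P n x - y⟫_ℂ = 0 :=
      (hproj n x).2 _ (Submodule.sub_mem _ (hPmem n x) hy)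
    have hd := norm_add_sq_eq_norm_sq_add_norm_sq_of_inner_eq_zero (x - P n x) (P n x - y) hz
    have hdecomp : (x - P n x) + (P n x - y) = x - y := by abel
    rw [hdecomp] at hd
    nlinarith [norm_nonneg (x - y), norm_nonneg (x - P n x), norm_nonneg (P n x - y)]
  have hPid : ∀ n, ∀ x ∈ L n, P n x = x := by
    intro n x hx
    have h := (hproj n x).2 (x - P n x) (Submodule.sub_mem _ hx (hPmem n x))
    rw [inner_self_eq_zero] at h
    exact (sub_eq_zero.1 h).symm
  have hPcontr : ∀ (n : ℕ) (x : H), ‖x - P n x‖ ≤ ‖x‖ := fun n x => by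
    simpa using hpyth n x 0 (Submodule.zero_mem _)
  have hPtend : ∀ x : H, Tendsto (fun n => ‖x - P n x‖) atTop (nhds 0) := by
    intro x
    apply squeeze_zero (fun n => norm_nonneg _) (fun n => ?_) (hdense x)
    by_contra hlt
    push_neg at hlt
    obtain ⟨y, hy, hdy⟩ := (Metric.infDist_lt_iff ⟨0, Submodule.zero_mem _⟩).1 hlt
    rw [dist_eq_norm] at hdy
    exact absurd (hpyth n x y hy) (not_le.2 hdy)
  -- uniform smallness of (1 - P n) ∘ K
  have hKconv : ∀ ε > (0:ℝ), ∃ N : ℕ, ∀ n ≥ N, ∀ x : H, ‖K x - P n (K x)‖ ≤ ε * ‖x‖ := by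
    intro ε hε
    have hcomp : IsCompact (closure (K.toLinearMap '' Metric.closedBall (0:H) 1)) :=
      IsCompactOperator.isCompact_closure_image_closedBall (𝕜₁ := ℂ) (f := K.toLinearMap) hK 1
    obtain ⟨t, htfin, htcover⟩ :=
      (Metric.totallyBounded_iff.1 hcomp.totallyBounded) (ε/3) (by positivity)
    have hev : ∀ᶠ n in atTop, ∀ y ∈ t, ‖y - P n y‖ ≤ ε/3 := by
      rw [htfin.eventually_all]
      intro y _
      exact ((hPtend y).eventually_lt_const (by positivity)).mono fun n hn => hn.le
    obtain ⟨N, hN⟩ := eventually_atTop.1 hev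
    refine ⟨N, fun n hn x => ?_⟩
    by_cases hx : x = 0
    · simp [hx]
    have hxn : ‖x‖ ≠ 0 := norm_ne_zero_iff.2 hx
    set z : H := (‖x‖⁻¹ : ℂ) • x with hzdef
    have hzmem : z ∈ Metric.closedBall (0:H) 1 := by
      rw [Metric.mem_closedBall, dist_zero_right, hzdef, norm_smul]
      simp [Complex.norm_real, inv_mul_cancel₀ hxn]
    have hKz : K z ∈ closure (K.toLinearMap '' Metric.closedBall (0:H) 1) :=
      subset_closure ⟨z, hzmem, rfl⟩
    obtain ⟨y, hyt, hyball⟩ := Set.mem_iUnion₂.1 (htcover hKz)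
    rw [Metric.mem_ball, dist_eq_norm] at hyball
    have hsplit : K z - P n (K z) = ((K z - y) - P n (K z - y)) + (y - P n y) := by
      rw [map_sub]; abel
    have hz1 : ‖K z - P n (K z)‖ ≤ ε := by
      rw [hsplit]
      calc ‖((K z - y) - P n (K z - y)) + (y - P n y)‖
          ≤ ‖(K z - y) - P n (K z - y)‖ + ‖y - P n y‖ := norm_add_le _ _
        _ ≤ ‖K z - y‖ + ε/3 := add_le_add (hPcontr n _) (hN n hn y hyt)
        _ ≤ ε/3 + ε/3 := add_le_add hyball.le le_rfl
        _ ≤ ε := by linarith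
    have hxz : x = (‖x‖ : ℂ) • z := by
      rw [hzdef, smul_smul]
      rw [mul_inv_cancel₀ (by exact_mod_cast hxn)]
      simp
    have hsc : (‖x‖ : ℂ) • (K z - P n (K z)) = K x - P n (K x) := by
      rw [smul_sub, ← map_smul (P n), ← map_smul K, ← hxz]
    rw [← hsc, norm_smul]
    have hco : ‖(‖x‖ : ℂ)‖ = ‖x‖ := by simp [Complex.norm_real]
    rw [hco, mul_comm]
    exact mul_le_mul_of_nonneg_right hz1 (norm_nonneg x)
  -- solve the limit equation
  have hinj' : ∀ x : H, x - K x = 0 → x = 0 := fun x hx => hinj x (sub_eq_zero.1 hx)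
  obtain ⟨c, hc, hlow⟩ := bdd_below_of_inj K hK hinj'
  obtain ⟨u, hu⟩ := fredholm_surjective K hK hinj' f
  refine ⟨u, by rw [← hu]; abel, ?_⟩
  obtain ⟨Nbig, hNbig⟩ := hKconv (c/2) (by positivity)
  have hAlow : ∀ n ≥ Nbig, ∀ x : H, (c/2) * ‖x‖ ≤ ‖x - P n (K x)‖ := by
    intro n hn x
    have h1 : ‖x - K x‖ ≤ ‖x - P n (K x)‖ + ‖K x - P n (K x)‖ := by
      have hsub : x - K x = (x - P n (K x)) - (K x - P n (K x)) := by abel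
      rw [hsub]; exact norm_sub_le _ _
    have h2 := hNbig n hn x
    have h3 := hlow x
    linarith
  have hAinj : ∀ n ≥ Nbig, ∀ x : H, x - P n (K x) = 0 → x = 0 := by
    intro n hn x hx
    have h1 := hAlow n hn x
    rw [hx, norm_zero] at h1
    have : ‖x‖ ≤ 0 := by nlinarith
    exact norm_le_zero_iff.1 this
  refine ⟨Nbig, ?_, ?_⟩
  · -- unique solvability
    intro n hn
    have hAcomp : IsCompactOperator ⇑((P n).comp K) := hK.clm_comp (P n)
    obtain ⟨w, hw⟩ := fredholm_surjective ((P n).comp K) hAcomp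
      (fun x hx => hAinj n hn x (by simpa using hx)) (P n f)
    have hw' : w - P n (K w) = P n f := by simpa using hw
    have hwmem : w ∈ L n := by
      have heq : w = P n (K w) + P n f := by rw [← hw']; abel
      rw [heq]; exact Submodule.add_mem _ (hPmem _ _) (hPmem _ _)
    refine ⟨w, ⟨hwmem, ?_⟩, ?_⟩
    · rw [map_sub, hPid n w hwmem]
      exact hw'
    · rintro w' ⟨hw'mem, hw'eq⟩
      rw [map_sub, hPid n w' hw'mem] at hw'eq
      have hdz : (w' - w) - P n (K (w' - w)) = 0 := by
        rw [map_sub, map_sub]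
        rw [show w' - w - (P n (K w') - P n (K w)) =
          (w' - P n (K w')) - (w - P n (K w)) from by abel, hw'eq, hw']
        abel
      exact sub_eq_zero.1 (hAinj n hn _ hdz)
  · -- convergence
    intro useq huseq
    rw [tendsto_iff_norm_sub_tendsto_zero]
    have hbound : ∀ n ≥ Nbig,
        ‖useq n - u‖ ≤ (2/c) * (‖f - P n f‖ + ‖K u - P n (K u)‖) := by
      intro n hn
      obtain ⟨hmem, heq⟩ := huseq n hn
      rw [map_sub, hPid n _ hmem] at heq
      have hu' : u - K u = f := hu
      have hA : (useq n - u) - P n (K (useq n - u)) = (P n f - f) - (K u - P n (K u)) := by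
        rw [map_sub K, map_sub (P n), ← heq, ← hu']
        abel
      have h1 := hAlow n hn (useq n - u)
      rw [hA] at h1
      have h2 : ‖(P n f - f) - (K u - P n (K u))‖ ≤ ‖f - P n f‖ + ‖K u - P n (K u)‖ := by
        refine le_trans (norm_sub_le _ _) ?_
        rw [norm_sub_rev]
      have h3 : (c/2) * ‖useq n - u‖ ≤ ‖f - P n f‖ + ‖K u - P n (K u)‖ := le_trans h1 h2
      have h4 : (2/c) * ((c/2) * ‖useq n - u‖) = ‖useq n - u‖ := by
        field_simp
      calc ‖useq n - u‖ = (2/c) * ((c/2) * ‖useq n - u‖) := h4.symm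
        _ ≤ (2/c) * (‖f - P n f‖ + ‖K u - P n (K u)‖) :=
            mul_le_mul_of_nonneg_left h3 (by positivity)
    have hg : Tendsto (fun n => (2/c) * (‖f - P n f‖ + ‖K u - P n (K u)‖)) atTop (nhds 0) := by
      have := ((hPtend f).add (hPtend (K u))).const_mul (2/c)
      simpa using this
    exact squeeze_zero' (Eventually.of_forall fun n => norm_nonneg _)
      (eventually_atTop.2 ⟨Nbig, hbound⟩) hg
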